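/- Let n be a positive integer, let p1, p2 be linearly independent vectors in ℤ^n with all entries positive, let r ∈ ℤ^n, and let k1, k2 be integers. Let M1, M2 be positive integers, set a2 = M2·p2 + r (assumed to have all entries positive) and a1 = M1·p1 + a2. Let B = {x ∈ ℝ^n : 0 ≤ x_j ≤ 1 for all j}. Assume the sets S3 = {x ∈ B : p1·x = k1+1, p2·x ≤ k2} and S4 = {x ∈ B : p1·x = k1+1, p2·x ≥ k2+1} are nonempty, and that β'2, β2 are real numbers with sup{a2·x : x ∈ S3} < β'2 ≤ β2 < inf{a2·x : x ∈ S4}. Set β'1 = β'2 + (k1+1)·M1 and β1 = β2 + (k1+1)·M1. Then the set {x ∈ B : β'1 ≤ a1·x ≤ β1 and p1·x = k1+1} is nonempty. -/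
import Mathlib


open Finset

theorem ckp_branch_nonempty (n : ℕ) (hn : 0 < n)
    (p1 p2 r : Fin n → ℤ)
    (hp1pos : ∀ i, 0 < p1 i) (hp2pos : ∀ i, 0 < p2 i)
    (hli : LinearIndependent ℤ ![p1, p2])
    (k1 k2 : ℤ) (M1 M2 : ℤ) (hM1 : 0 < M1) (hM2 : 0 < M2)
    (a2 : Fin n → ℤ) (ha2 : a2 = fun i => M2 * p2 i + r i)
    (ha2pos : ∀ i, 0 < a2 i)
    (a1 : Fin n → ℤ) (ha1 : a1 = fun i => M1 * p1 i + a2 i)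
    (B : Set (Fin n → ℝ)) (hB : B = {x | ∀ j, 0 ≤ x j ∧ x j ≤ 1})
    (S3 S4 : Set (Fin n → ℝ))
    (hS3 : S3 = {x ∈ B | ∑ i, (p1 i : ℝ) * x i = (k1 : ℝ) + 1 ∧
      ∑ i, (p2 i : ℝ) * x i ≤ (k2 : ℝ)})
    (hS4 : S4 = {x ∈ B | ∑ i, (p1 i : ℝ) * x i = (k1 : ℝ) + 1 ∧
      (k2 : ℝ) + 1 ≤ ∑ i, (p2 i : ℝ) * x i})
    (hS3ne : S3.Nonempty) (hS4ne : S4.Nonempty)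
    (β'2 β2 : ℝ)
    (hsup : sSup ((fun x => ∑ i, (a2 i : ℝ) * x i) '' S3) < β'2)
    (hββ : β'2 ≤ β2)
    (hinf : β2 < sInf ((fun x => ∑ i, (a2 i : ℝ) * x i) '' S4))
    (β'1 β1 : ℝ)
    (hβ'1 : β'1 = β'2 + ((k1 : ℝ) + 1) * (M1 : ℝ))
    (hβ1 : β1 = β2 + ((k1 : ℝ) + 1) * (M1 : ℝ)) :
    ∃ x ∈ B, (β'1 ≤ ∑ i, (a1 i : ℝ) * x i ∧ ∑ i, (a1 i : ℝ) * x i ≤ β1) ∧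
      ∑ i, (p1 i : ℝ) * x i = (k1 : ℝ) + 1 := by

  obtain ⟨u, hu⟩ := hS3ne
  obtain ⟨v, hv⟩ := hS4ne
  rw [hS3] at hu; rw [hS4] at hv
  obtain ⟨huB, hup1, hup2⟩ := hu
  obtain ⟨hvB, hvp1, hvp2⟩ := hv
  rw [hB] at huB hvB
  set A : ℝ := ∑ i, (a2 i : ℝ) * u i with hA
  set C : ℝ := ∑ i, (a2 i : ℝ) * v i with hC
  have ha2nn : ∀ i : Fin n, (0:ℝ) ≤ (a2 i : ℝ) := fun i => by
    exact_mod_cast (ha2pos i).le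
  have hAlt : A < β'2 := by
    refine lt_of_le_of_lt (le_csSup ?_ ?_) hsup
    · refine ⟨∑ i, (a2 i : ℝ), ?_⟩
      rintro y ⟨x, hx, rfl⟩
      rw [hS3] at hx
      have hxB := hx.1; rw [hB] at hxB
      calc ∑ i, (a2 i : ℝ) * x i ≤ ∑ i, (a2 i : ℝ) * 1 :=
            Finset.sum_le_sum (fun i _ => mul_le_mul_of_nonneg_left (hxB i).2 (ha2nn i))
        _ = ∑ i, (a2 i : ℝ) := by simp
    · exact ⟨u, by rw [hS3]; exact ⟨by rw [hB]; exact huB, hup1, hup2⟩, rfl⟩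
  have hCgt : β2 < C := by
    refine lt_of_lt_of_le hinf (csInf_le ?_ ?_)
    · refine ⟨0, ?_⟩
      rintro y ⟨x, hx, rfl⟩
      rw [hS4] at hx
      have hxB := hx.1; rw [hB] at hxB
      exact Finset.sum_nonneg (fun i _ => mul_nonneg (ha2nn i) (hxB i).1)
    · exact ⟨v, by rw [hS4]; exact ⟨by rw [hB]; exact hvB, hvp1, hvp2⟩, rfl⟩
  have hCA : 0 < C - A := by linarith
  set t : ℝ := (β'2 - A) / (C - A) with ht
  have ht0 : 0 ≤ t := div_nonneg (by linarith) hCA.le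
  have ht1 : t ≤ 1 := by
    rw [div_le_one hCA]; linarith
  refine ⟨fun j => (1 - t) * u j + t * v j, ?_, ?_, ?_⟩
  · rw [hB]
    intro j
    constructor
    · show 0 ≤ (1 - t) * u j + t * v j
      have := (huB j).1; have := (hvB j).1
      nlinarith
    · show (1 - t) * u j + t * v j ≤ 1
      have := (huB j).2; have := (hvB j).2
      nlinarith
  rotate_left
  · -- p1 sum
    have : ∑ i, (p1 i : ℝ) * ((1 - t) * u i + t * v i)
        = (1 - t) * (∑ i, (p1 i : ℝ) * u i) + t * (∑ i, (p1 i : ℝ) * v i) := by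
      rw [Finset.mul_sum, Finset.mul_sum, ← Finset.sum_add_distrib]
      exact Finset.sum_congr rfl (fun i _ => by ring)
    rw [this, hup1, hvp1]; ring
  · -- a1 sum bounds
    have hsplit : ∀ (c : Fin n → ℝ) (w : Fin n → ℝ),
        True := fun _ _ => trivial
    have hcomb : ∀ (c : Fin n → ℝ),
        ∑ i, c i * ((1 - t) * u i + t * v i)
        = (1 - t) * (∑ i, c i * u i) + t * (∑ i, c i * v i) := by
      intro c
      rw [Finset.mul_sum, Finset.mul_sum, ← Finset.sum_add_distrib]
      exact Finset.sum_congr rfl (fun i _ => by ring)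
    have ha1sum : ∑ i, (a1 i : ℝ) * ((1 - t) * u i + t * v i)
        = (M1 : ℝ) * (∑ i, (p1 i : ℝ) * ((1 - t) * u i + t * v i))
          + ∑ i, (a2 i : ℝ) * ((1 - t) * u i + t * v i) := by
      rw [ha1, Finset.mul_sum, ← Finset.sum_add_distrib]
      refine Finset.sum_congr rfl (fun i _ => ?_)
      push_cast
      ring
    have hp1val : ∑ i, (p1 i : ℝ) * ((1 - t) * u i + t * v i) = (k1 : ℝ) + 1 := by
      rw [hcomb, hup1, hvp1]; ring
    have ha2val : ∑ i, (a2 i : ℝ) * ((1 - t) * u i + t * v i) = β'2 := by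
      rw [hcomb, ← hA, ← hC]
      have htC : t * (C - A) = β'2 - A := by
        rw [ht]; field_simp
      linear_combination htC
    rw [ha1sum, hp1val, ha2val, hβ'1, hβ1]
    constructor <;> [linarith; linarith]
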